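/- For every positive integer n, every union-free subfamily of the extended grid family {X_{ij} : 1 ≤ i ≤ n+1, 1 ≤ j ≤ n} has size at most 2n. -/

import Mathlib

/-- A family of sets is *union-free* if there are no three distinct sets
`X, Y, Z` in the family with `X ∪ Y = Z`. -/
def UnionFree (F : Finset (Finset ℕ)) : Prop :=
  ∀ X ∈ F, ∀ Y ∈ F, ∀ Z ∈ F, X ≠ Y → X ≠ Z → Y ≠ Z → X ∪ Y ≠ Z

/-- The set `X_{ij} = {x ∈ ℕ : n + 1 - i ≤ x ≤ n + j}`. -/
def gridSet (n i j : ℕ) : Finset ℕ := Finset.Icc (n + 1 - i) (n + j)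

/-- The extended grid family `{X_{ij} : 1 ≤ i ≤ n + 1, 1 ≤ j ≤ n}`. -/
def ESgridExt (n : ℕ) : Finset (Finset ℕ) :=
  (Finset.Icc 1 (n + 1) ×ˢ Finset.Icc 1 n).image fun p => gridSet n p.1 p.2

open Finset

/-- left endpoint -/
noncomputable def fa (X : Finset ℕ) : ℕ := WithTop.untopD 0 X.min
/-- right endpoint -/
noncomputable def fb (X : Finset ℕ) : ℕ := WithBot.unbotD 0 X.max

lemma fa_icc {a b : ℕ} (hab : a ≤ b) : fa (Finset.Icc a b) = a := by
  have hne : (Finset.Icc a b).Nonempty := ⟨a, by simp [hab]⟩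
  have h1 : (Finset.Icc a b).min' hne = a := by
    apply le_antisymm
    · exact Finset.min'_le _ a (by simp [hab])
    · exact Finset.le_min' _ _ _ (fun x hx => (Finset.mem_Icc.mp hx).1)
  have h2 : (Finset.Icc a b).min = (a : WithTop ℕ) := by
    rw [← Finset.coe_min' hne, h1]; rfl
  simp only [fa, h2]; rfl

lemma fb_icc {a b : ℕ} (hab : a ≤ b) : fb (Finset.Icc a b) = b := by
  have hne : (Finset.Icc a b).Nonempty := ⟨a, by simp [hab]⟩
  have h1 : (Finset.Icc a b).max' hne = b := by
    apply le_antisymm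
    · exact Finset.max'_le _ _ _ (fun x hx => (Finset.mem_Icc.mp hx).2)
    · exact Finset.le_max' _ b (by simp [hab])
  have h2 : (Finset.Icc a b).max = (b : WithBot ℕ) := by
    rw [← Finset.coe_max' hne, h1]; rfl
  simp only [fb, h2]; rfl

lemma ext_struct {n : ℕ} {X : Finset ℕ} (hX : X ∈ ESgridExt n) :
    X = Finset.Icc (fa X) (fb X) ∧ fa X ≤ n ∧ n + 1 ≤ fb X ∧ fb X ≤ 2 * n := by
  simp only [ESgridExt, Finset.mem_image, Finset.mem_product, Finset.mem_Icc] at hX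
  obtain ⟨⟨i, j⟩, ⟨⟨hi1, hi2⟩, hj1, hj2⟩, rfl⟩ := hX
  have hab : n + 1 - i ≤ n + j := by omega
  rw [gridSet, fa_icc hab, fb_icc hab]
  refine ⟨rfl, by omega, by omega, by omega⟩

/-- Every union-free subfamily of the extended grid family has size at most `2n`. -/
theorem esgridExt_unionFree_le (n : ℕ) (hn : 0 < n)
    (G : Finset (Finset ℕ)) (hG : G ⊆ ESgridExt n) (h : UnionFree G) :
    G.card ≤ 2 * n := by
  classical
  rcases G.eq_empty_or_nonempty with rfl | hGne
  · simp
  have key : ∀ X ∈ G, X = Finset.Icc (fa X) (fb X) ∧ fa X ≤ n ∧ n + 1 ≤ fb X ∧ fb X ≤ 2 * n :=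
    fun X hX => ext_struct (hG hX)
  have inj_pair : ∀ X ∈ G, ∀ Y ∈ G, fa X = fa Y → fb X = fb Y → X = Y := by
    intro X hX Y hY h1 h2
    rw [(key X hX).1, (key Y hY).1, h1, h2]
  -- structural consequence of union-freeness
  have struct : ∀ Z ∈ G, ¬((∃ X ∈ G, fa X = fa Z ∧ fb X < fb Z) ∧
      (∃ Y ∈ G, fb Y = fb Z ∧ fa Z < fa Y)) := by
    rintro Z hZ ⟨⟨X, hX, hXa, hXb⟩, ⟨Y, hY, hYb, hYa⟩⟩
    have kX := key X hX; have kY := key Y hY; have kZ := key Z hZ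
    have hXY : X ≠ Y := by
      intro e; rw [e] at hXa; omega
    have hXZ : X ≠ Z := by
      intro e; rw [e] at hXb; omega
    have hYZ : Y ≠ Z := by
      intro e; rw [e] at hYa; omega
    apply h X hX Y hY Z hZ hXY hXZ hYZ
    rw [kX.1, kY.1, kZ.1]
    ext x
    simp only [Finset.mem_union, Finset.mem_Icc]
    have h1 := kX.2; have h2 := kY.2; have h3 := kZ.2
    omega
  set G₁ := G.filter (fun Z => ∀ X ∈ G, fa X = fa Z → fb Z ≤ fb X) with hG₁
  set G₂ := G.filter (fun Z => ∀ Y ∈ G, fb Y = fb Z → fa Y ≤ fa Z) with hG₂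
  have hsub : G ⊆ G₁ ∪ G₂ := by
    intro Z hZ
    by_contra hc
    simp only [Finset.mem_union, hG₁, hG₂, Finset.mem_filter, hZ, true_and, not_or,
      not_forall] at hc
    obtain ⟨⟨X, hX, hXa, hXb⟩, ⟨Y, hY, hYb, hYa⟩⟩ := hc
    exact struct Z hZ ⟨⟨X, hX, hXa, by omega⟩, ⟨Y, hY, hYb, by omega⟩⟩
  have card1 : G₁.card ≤ n + 1 := by
    have : G₁.card ≤ (Finset.Icc 0 n).card := by
      apply Finset.card_le_card_of_injOn fa
      · intro X hX
        simp only [hG₁, Finset.mem_coe, Finset.mem_filter] at hX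
        simp [Finset.mem_Icc, (key X hX.1).2.1]
      · intro X hX Y hY hfa
        simp only [hG₁, Finset.mem_filter, Finset.coe_filter, Set.mem_setOf_eq] at hX hY
        have h1 := hX.2 Y hY.1 hfa.symm
        have h2 := hY.2 X hX.1 hfa
        exact inj_pair X hX.1 Y hY.1 hfa (by omega)
    simpa using this
  have card2 : G₂.card ≤ n := by
    have : G₂.card ≤ (Finset.Icc (n + 1) (2 * n)).card := by
      apply Finset.card_le_card_of_injOn fb
      · intro X hX
        simp only [hG₂, Finset.mem_coe, Finset.mem_filter] at hX
        have := (key X hX.1).2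
        simp [Finset.mem_Icc]; omega
      · intro X hX Y hY hfb
        simp only [hG₂, Finset.mem_filter, Finset.coe_filter, Set.mem_setOf_eq] at hX hY
        have h1 := hX.2 Y hY.1 hfb.symm
        have h2 := hY.2 X hX.1 hfb
        exact inj_pair X hX.1 Y hY.1 (by omega) hfb
    rw [Nat.card_Icc] at this
    omega
  -- a point that is both a column minimum and a row maximum
  have himg : (G.image fa).Nonempty := hGne.image fa
  set A := (G.image fa).max' himg with hA
  have hAmem : A ∈ G.image fa := Finset.max'_mem _ himg
  obtain ⟨W, hW, hWA⟩ := Finset.mem_image.mp hAmem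
  set S := G.filter (fun X => fa X = A) with hS
  have hSne : S.Nonempty := ⟨W, Finset.mem_filter.mpr ⟨hW, hWA⟩⟩
  have hSimg : (S.image fb).Nonempty := hSne.image fb
  set B := (S.image fb).min' hSimg with hB
  have hBmem : B ∈ S.image fb := Finset.min'_mem _ hSimg
  obtain ⟨X₀, hX₀S, hX₀B⟩ := Finset.mem_image.mp hBmem
  have hX₀G : X₀ ∈ G := (Finset.mem_filter.mp hX₀S).1
  have hX₀A : fa X₀ = A := (Finset.mem_filter.mp hX₀S).2
  have hinter : X₀ ∈ G₁ ∩ G₂ := by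
    rw [Finset.mem_inter, hG₁, hG₂, Finset.mem_filter, Finset.mem_filter]
    refine ⟨⟨hX₀G, ?_⟩, ⟨hX₀G, ?_⟩⟩
    · intro X hX hXa
      have : fb X ∈ S.image fb := Finset.mem_image_of_mem fb
        (Finset.mem_filter.mpr ⟨hX, by rw [hXa, hX₀A]⟩)
      rw [hX₀B]
      exact Finset.min'_le _ _ this
    · intro Y hY _
      rw [hX₀A]
      exact Finset.le_max' _ _ (Finset.mem_image_of_mem fa hY)
  have hinter_card : 1 ≤ (G₁ ∩ G₂).card := Finset.card_pos.mpr ⟨X₀, hinter⟩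
  have hu := Finset.card_union_add_card_inter G₁ G₂
  have := Finset.card_le_card hsub
  omega
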